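/- For every even positive integer k ≥ 2, there exists a graph G on exactly 2^{k-1} + k - 2 vertices admitting a redundant locating-dominating set of size k. Concretely, the graph consisting of a clique on k vertices together with, for each even 2 ≤ 2i ≤ k-2 and each 2i-element subset A of the clique, one additional vertex adjacent exactly to A, has this property with the clique as the RED:LD set. -/

import Mathlib

open scoped symmDiff

/-- A locating-dominating (LD) set: every non-detector is dominated, and
distinct non-detectors have distinct neighborhood traces on `S`. -/
def IsLDSet {V : Type*} (G : SimpleGraph V) (S : Set V) : Prop :=
  (∀ v ∉ S, (G.neighborSet v ∩ S).Nonempty) ∧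
    ∀ u ∉ S, ∀ v ∉ S, u ≠ v → G.neighborSet u ∩ S ≠ G.neighborSet v ∩ S

/-- A redundant locating-dominating (RED:LD) set. -/
def IsRedLDSet {V : Type*} (G : SimpleGraph V) (S : Set V) : Prop :=
  IsLDSet G S ∧ ∀ v ∈ S, IsLDSet G (S \ {v})

/-- A leaf is a vertex of degree 1. -/
def IsLeaf {V : Type*} (G : SimpleGraph V) (v : V) : Prop :=
  (G.neighborSet v).ncard = 1

/-- A support vertex is a vertex adjacent to a leaf. -/
def IsSupport {V : Type*} (G : SimpleGraph V) (v : V) : Prop :=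
  ∃ u, G.Adj v u ∧ IsLeaf G u
/-- Vertex type: a clique on `Fin k` plus one extra vertex for each even-sized
subset `A` of the clique with `2 ≤ |A| ≤ k - 2`. -/
def V6 (k : ℕ) : Type :=
  Fin k ⊕ {A : Finset (Fin k) // Even A.card ∧ 2 ≤ A.card ∧ A.card ≤ k - 2}

instance (k : ℕ) : Fintype (V6 k) := by unfold V6; infer_instance

/-- The clique vertices are pairwise adjacent, and each extra vertex is adjacent
exactly to the members of its subset. -/
def G6 (k : ℕ) : SimpleGraph (V6 k) where
  Adj a b := a ≠ b ∧
    ((∃ i j : Fin k, a = Sum.inl i ∧ b = Sum.inl j) ∨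
     (∃ i A, a = Sum.inl i ∧ b = Sum.inr A ∧ i ∈ A.val) ∨
     (∃ i A, a = Sum.inr A ∧ b = Sum.inl i ∧ i ∈ A.val))
  symm := by
    constructor
    rintro a b ⟨hne, h⟩
    refine ⟨hne.symm, ?_⟩
    rcases h with ⟨i, j, ha, hb⟩ | ⟨i, A, ha, hb, hm⟩ | ⟨i, A, ha, hb, hm⟩
    · exact Or.inl ⟨j, i, hb, ha⟩
    · exact Or.inr (Or.inr ⟨i, A, hb, ha, hm⟩)
    · exact Or.inr (Or.inl ⟨i, A, hb, ha, hm⟩)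
  loopless := by constructor; rintro a ⟨hne, _⟩; exact hne rfl



open Finset in
lemma even_count' (k : ℕ) (hk : 1 ≤ k) :
    ((univ : Finset (Fin k)).powerset.filter (fun A => Even A.card)).card = 2 ^ (k - 1) := by
  classical
  set E := ((univ : Finset (Fin k)).powerset.filter (fun A => Even A.card)).card with hE
  set O := ((univ : Finset (Fin k)).powerset.filter (fun A => ¬ Even A.card)).card with hO
  have hEO : E + O = 2 ^ k := by
    rw [hE, hO, Finset.card_filter_add_card_filter_not, Finset.card_powerset,
      Finset.card_univ, Fintype.card_fin]
  have hsum : ∑ A ∈ (univ : Finset (Fin k)).powerset, (-1 : ℤ) ^ A.card = 0 :=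
    Finset.sum_powerset_neg_one_pow_card_of_nonempty (Finset.univ_nonempty_iff.mpr
      ⟨⟨0, hk⟩⟩)
  have hdiff : (E : ℤ) = O := by
    have := (Finset.sum_filter_add_sum_filter_not ((univ : Finset (Fin k)).powerset)
      (fun A => Even A.card) (fun A => (-1 : ℤ) ^ A.card)).trans hsum
    rw [Finset.sum_congr rfl (fun A hA => Even.neg_one_pow (α := ℤ) (Finset.mem_filter.mp hA).2),
      Finset.sum_congr rfl (fun A hA => Odd.neg_one_pow (α := ℤ) (Nat.not_even_iff_odd.mp (Finset.mem_filter.mp hA).2))] at this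
    simp only [Finset.sum_const, nsmul_eq_mul, mul_one, mul_neg_one] at this
    linarith
  have hEO' : E = O := by exact_mod_cast hdiff
  have h2e : 2 * E = 2 ^ k := by omega
  have h2 : 2 ^ k = 2 * 2 ^ (k - 1) := by
    rw [← pow_succ']
    congr 1
    omega
  omega

lemma erase_eq_imp {k : ℕ} {A B : Finset (Fin k)} (hA : Even A.card) (hB : Even B.card)
    (j : Fin k) (h : A.erase j = B.erase j) : A = B := by
  classical
  by_cases hjA : j ∈ A <;> by_cases hjB : j ∈ B
  · rw [← Finset.insert_erase hjA, ← Finset.insert_erase hjB, h]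
  · exfalso
    have hBe : B = A.erase j := by rw [← Finset.erase_eq_of_notMem hjB]; exact h.symm
    have hc : B.card = A.card - 1 := by rw [hBe, Finset.card_erase_of_mem hjA]
    have h1 : 1 ≤ A.card := Finset.card_pos.mpr ⟨j, hjA⟩
    rw [Nat.even_iff] at hA hB
    omega
  · exfalso
    have hAe : A = B.erase j := by rw [← Finset.erase_eq_of_notMem hjA]; exact h
    have hc : A.card = B.card - 1 := by rw [hAe, Finset.card_erase_of_mem hjB]
    have h1 : 1 ≤ B.card := Finset.card_pos.mpr ⟨j, hjB⟩
    rw [Nat.even_iff] at hA hB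
    omega
  · rw [← Finset.erase_eq_of_notMem hjA, ← Finset.erase_eq_of_notMem hjB, h]

lemma nbr_inr {k : ℕ} (A : {A : Finset (Fin k) // Even A.card ∧ 2 ≤ A.card ∧ A.card ≤ k - 2})
    (T : Set (Fin k)) :
    (G6 k).neighborSet (Sum.inr A) ∩ (Sum.inl '' T) = Sum.inl '' ((A.val : Set (Fin k)) ∩ T) := by
  ext a
  constructor
  · rintro ⟨⟨hne, h⟩, ⟨i, hiT, rfl⟩⟩
    refine ⟨i, ⟨?_, hiT⟩, rfl⟩
    rcases h with ⟨_, _, h, _⟩ | ⟨_, _, h, _⟩ | ⟨i', A', hA', hi', hm⟩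
    · exact absurd h (by simp)
    · exact absurd h (by simp)
    · cases hA'; cases hi'; exact hm
  · rintro ⟨i, ⟨hiA, hiT⟩, rfl⟩
    exact ⟨⟨Sum.inr_ne_inl, Or.inr (Or.inr ⟨i, A, rfl, rfl, hiA⟩)⟩, ⟨i, hiT, rfl⟩⟩

lemma nbr_inl {k : ℕ} (i : Fin k) (T : Set (Fin k)) :
    (G6 k).neighborSet (Sum.inl i) ∩ (Sum.inl '' T) = Sum.inl '' (T \ {i}) := by
  ext a
  constructor
  · rintro ⟨⟨hne, h⟩, ⟨j, hjT, rfl⟩⟩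
    exact ⟨j, ⟨hjT, fun hji => hne (by simp at hji; simp [hji]; rfl)⟩, rfl⟩
  · rintro ⟨j, ⟨hjT, hji⟩, rfl⟩
    refine ⟨⟨fun h => hji (by cases h; exact rfl), Or.inl ⟨i, j, rfl, rfl⟩⟩, ⟨j, hjT, rfl⟩⟩

theorem stmt6 (k : ℕ) (hk : 2 ≤ k) (hke : Even k) :
    Fintype.card (V6 k) = 2 ^ (k - 1) + k - 2 ∧
    IsRedLDSet (G6 k) {a : V6 k | ∃ i : Fin k, a = Sum.inl i} ∧
    ({a : V6 k | ∃ i : Fin k, a = Sum.inl i}).ncard = k := by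
  classical
  set P : Finset (Fin k) → Prop := fun A => Even A.card ∧ 2 ≤ A.card ∧ A.card ≤ k - 2 with hP
  have hSimg : {a : V6 k | ∃ i : Fin k, a = Sum.inl i} = Sum.inl '' (Set.univ : Set (Fin k)) := by
    ext a; simp [eq_comm]
    exact ⟨fun ⟨i, h⟩ => ⟨i, h.symm⟩, fun ⟨i, h⟩ => ⟨i, h.symm⟩⟩
  have hinj : Function.Injective (Sum.inl :
      Fin k → Fin k ⊕ {A : Finset (Fin k) // P A}) := Sum.inl_injective
  have himg : ∀ T T' : Set (Fin k), Sum.inl '' T = Sum.inl '' T' → T = T' :=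
    fun T T' h => Set.image_injective.mpr hinj h
  refine ⟨?_, ⟨?_, ?_⟩, ?_⟩
  · -- cardinality
    have h1 : Fintype.card (V6 k) =
        Fintype.card (Fin k ⊕ {A : Finset (Fin k) // P A}) :=
      Fintype.card_eq.mpr ⟨Equiv.refl _⟩
    rw [h1, Fintype.card_sum, Fintype.card_fin, Fintype.card_subtype]
    have hfe : (Finset.univ : Finset (Finset (Fin k))).filter P =
        (((Finset.univ : Finset (Finset (Fin k))).filter (fun A => Even A.card)).erase
          (Finset.univ : Finset (Fin k))).erase ∅ := by
      ext A
      simp only [Finset.mem_erase, Finset.mem_filter, Finset.mem_univ, true_and, hP]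
      have hle : A.card ≤ k := by
        have := Finset.card_le_univ A
        simpa using this
      have h0 : A = ∅ ↔ A.card = 0 := Finset.card_eq_zero.symm
      have hu : A = Finset.univ ↔ A.card = k := by
        rw [← Finset.card_eq_iff_eq_univ]
        simp
      constructor
      · rintro ⟨he, h2, h3⟩
        exact ⟨fun h => absurd (h0.mp h) (by omega),
          fun h => absurd (hu.mp h) (by omega), he⟩
      · rintro ⟨h0', hu', he⟩
        have hc0 : A.card ≠ 0 := fun h => h0' (h0.mpr h)
        have hck : A.card ≠ k := fun h => hu' (hu.mpr h)
        have he' := Nat.even_iff.mp he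
        have hke' := Nat.even_iff.mp hke
        exact ⟨he, by omega, by omega⟩
    rw [hfe]
    have hmem1 : (Finset.univ : Finset (Fin k)) ∈
        (Finset.univ : Finset (Finset (Fin k))).filter (fun A => Even A.card) := by
      simp [Finset.card_univ, hke]
    have hmem2 : (∅ : Finset (Fin k)) ∈
        (((Finset.univ : Finset (Finset (Fin k))).filter (fun A => Even A.card)).erase
          (Finset.univ : Finset (Fin k))) := by
      refine Finset.mem_erase.mpr ⟨?_, by simp⟩
      intro h
      have : (Finset.univ : Finset (Fin k)).Nonempty :=
        Finset.univ_nonempty_iff.mpr ⟨⟨0, by omega⟩⟩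
      rw [← h] at this
      exact Finset.not_nonempty_empty this
    rw [Finset.card_erase_of_mem hmem2, Finset.card_erase_of_mem hmem1]
    have hcount : ((Finset.univ : Finset (Finset (Fin k))).filter
        (fun A => Even A.card)).card = 2 ^ (k - 1) := by
      rw [← Finset.powerset_univ]
      exact even_count' k (by omega)
    rw [hcount]
    have h2p : 2 ≤ 2 ^ (k - 1) := by
      calc 2 = 2 ^ 1 := rfl
      _ ≤ 2 ^ (k - 1) := Nat.pow_le_pow_right (by norm_num) (by omega)
    omega
  · -- S is LD
    rw [hSimg]
    constructor
    · rintro v hv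
      rcases v with i | A
      · exact absurd ⟨i, Set.mem_univ i, rfl⟩ hv
      · erw [nbr_inr A Set.univ]
        obtain ⟨i, hi⟩ := Finset.card_pos.mp (by omega : 0 < A.val.card)
        exact ⟨Sum.inl i, ⟨i, ⟨hi, Set.mem_univ i⟩, rfl⟩⟩
    · rintro u hu v hv huv heq
      rcases u with i | A
      · exact absurd ⟨i, Set.mem_univ i, rfl⟩ hu
      rcases v with i | A'
      · exact absurd ⟨i, Set.mem_univ i, rfl⟩ hv
      erw [nbr_inr A Set.univ, nbr_inr A' Set.univ] at heq
      have := himg _ _ heq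
      simp only [Set.inter_univ, Finset.coe_inj] at this
      exact huv (by rw [Subtype.ext this])
  · -- redundancy
    rintro v hv
    obtain ⟨j, rfl⟩ := hv
    have hS' : {a : V6 k | ∃ i : Fin k, a = Sum.inl i} \ {Sum.inl j} =
        Sum.inl '' ({j}ᶜ : Set (Fin k)) := by
      ext a
      constructor
      · rintro ⟨⟨i, rfl⟩, hne⟩
        exact ⟨i, fun h => hne (congrArg Sum.inl h), rfl⟩
      · rintro ⟨i, hij, rfl⟩
        exact ⟨⟨i, rfl⟩, fun h => hij (Sum.inl.inj h)⟩
    erw [hS']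
    have hnotmem : ∀ w : V6 k, w ∉ Sum.inl '' ({j}ᶜ : Set (Fin k)) →
        w = Sum.inl j ∨ ∃ A, w = Sum.inr A := by
      rintro (i | A) hw
      · left
        by_contra h
        exact hw ⟨i, fun he => h (congrArg Sum.inl he), rfl⟩
      · exact Or.inr ⟨A, rfl⟩
    have htraceJ : (G6 k).neighborSet (Sum.inl j) ∩ (Sum.inl '' ({j}ᶜ : Set (Fin k))) =
        Sum.inl '' ({j}ᶜ : Set (Fin k)) := by
      rw [nbr_inl j _]
      ext i
      simp
    have htraceA : ∀ A, (G6 k).neighborSet (Sum.inr A) ∩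
        (Sum.inl '' ({j}ᶜ : Set (Fin k))) = Sum.inl '' ((A.val : Set (Fin k)) ∩ {j}ᶜ) :=
      fun A => nbr_inr A _
    have hAcoe : ∀ A : Finset (Fin k), ((A.erase j : Finset (Fin k)) : Set (Fin k)) =
        (A : Set (Fin k)) ∩ {j}ᶜ := by
      intro A
      rw [Finset.coe_erase, Set.diff_eq]
    haveI : Nontrivial (Fin k) := Fin.nontrivial_iff_two_le.mpr hk
    constructor
    · rintro w hw
      rcases hnotmem w hw with rfl | ⟨A, rfl⟩
      · erw [htraceJ]
        obtain ⟨i, hij⟩ := exists_ne j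
        exact ⟨Sum.inl i, ⟨i, hij, rfl⟩⟩
      · erw [htraceA A]
        obtain ⟨i, hiA, hij⟩ := Finset.exists_mem_ne (by omega : 1 < A.val.card) j
        exact ⟨Sum.inl i, ⟨i, ⟨hiA, hij⟩, rfl⟩⟩
    · rintro u hu w hw huw heq
      have hjA : ∀ A : {A : Finset (Fin k) // P A},
          ¬ (({j}ᶜ : Set (Fin k)) = (A.val : Set (Fin k)) ∩ {j}ᶜ) := by
        rintro A habs
        have hcompl : 1 < (Finset.univ \ A.val).card := by
          rw [Finset.card_sdiff_of_subset (Finset.subset_univ _), Finset.card_univ, Fintype.card_fin]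
          have := A.prop.2.2
          omega
        obtain ⟨i, hiC, hij⟩ := Finset.exists_mem_ne hcompl j
        have hiA : i ∉ A.val := (Finset.mem_sdiff.mp hiC).2
        have : i ∈ (A.val : Set (Fin k)) ∩ {j}ᶜ := habs ▸ hij
        exact hiA this.1
      rcases hnotmem u hu with rfl | ⟨A, rfl⟩ <;> rcases hnotmem w hw with rfl | ⟨A', rfl⟩
      · exact huw rfl
      · erw [htraceJ, htraceA A'] at heq
        exact hjA A' (himg _ _ heq)
      · erw [htraceJ, htraceA A] at heq
        exact hjA A (himg _ _ heq.symm)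
      · erw [htraceA A, htraceA A'] at heq
        have h1 := himg _ _ heq
        rw [← hAcoe A.val, ← hAcoe A'.val, Finset.coe_inj] at h1
        have := erase_eq_imp A.prop.1 A'.prop.1 j h1
        exact huw (by rw [Subtype.ext this])
  · erw [hSimg, Set.ncard_image_of_injective _ Sum.inl_injective, Set.ncard_univ,
      Nat.card_eq_fintype_card, Fintype.card_fin]
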